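/- Let N ≥ 2, e_1,…,e_N be nonzero reals and m_1,…,m_N positive reals, and let 𝒜_N be the tridiagonal matrix of the previous context. Then det 𝒜_N > 0; in particular 𝒜_N is invertible. -/

import Mathlib

open Finset
open scoped Matrix

private lemma two_point_sum {n : ℕ} (f : Fin n → ℝ) (a b : Fin n) (hab : a ≠ b)
    (h : ∀ c, c ≠ a → c ≠ b → f c = 0) : ∑ k, f k = f a + f b := by
  rw [← Finset.sum_pair hab]
  exact (Finset.sum_subset (Finset.subset_univ _) (by
    intro c _ hc
    simp only [Finset.mem_insert, Finset.mem_singleton, not_or] at hc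
    exact h c hc.1 hc.2)).symm

set_option maxHeartbeats 2000000 in
private lemma key_posdef (n : ℕ) (e m : ℕ → ℝ)
    (he : ∀ i, 1 ≤ i → i ≤ n + 1 → e i ≠ 0)
    (hm : ∀ i, 1 ≤ i → i ≤ n + 1 → 0 < m i) :
    (Matrix.of fun i j : Fin n =>
      if (i : ℕ) = (j : ℕ) then
        e ((i : ℕ) + 2) ^ 2 * m ((i : ℕ) + 1) + e ((i : ℕ) + 1) ^ 2 * m ((i : ℕ) + 2)
      else if (i : ℕ) + 1 = (j : ℕ) then
        -(e ((i : ℕ) + 1) * e ((i : ℕ) + 3) * m ((i : ℕ) + 2))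
      else if (j : ℕ) + 1 = (i : ℕ) then
        -(e ((j : ℕ) + 1) * e ((j : ℕ) + 3) * m ((j : ℕ) + 2))
      else 0).PosDef := by
  set B : Matrix (Fin (n + 1)) (Fin n) ℝ := Matrix.of fun k j =>
    if (k : ℕ) = (j : ℕ) then e ((j : ℕ) + 2)
    else if (k : ℕ) = (j : ℕ) + 1 then -(e ((j : ℕ) + 1)) else 0 with hBdef
  set D : Matrix (Fin (n + 1)) (Fin (n + 1)) ℝ :=
    Matrix.diagonal fun k : Fin (n + 1) => m ((k : ℕ) + 1) with hDdef
  have hD : D.PosDef := Matrix.PosDef.diagonal fun k => hm ((k : ℕ) + 1) (by omega) (by omega)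
  have hAB : (Matrix.of fun i j : Fin n =>
      if (i : ℕ) = (j : ℕ) then
        e ((i : ℕ) + 2) ^ 2 * m ((i : ℕ) + 1) + e ((i : ℕ) + 1) ^ 2 * m ((i : ℕ) + 2)
      else if (i : ℕ) + 1 = (j : ℕ) then
        -(e ((i : ℕ) + 1) * e ((i : ℕ) + 3) * m ((i : ℕ) + 2))
      else if (j : ℕ) + 1 = (i : ℕ) then
        -(e ((j : ℕ) + 1) * e ((j : ℕ) + 3) * m ((j : ℕ) + 2))
      else 0) = B.conjTranspose * D * B := by
    ext i j
    have h1 : ((B.conjTranspose * D * B) i j) = ∑ k : Fin (n + 1), B k i * (m ((k : ℕ) + 1) * B k j) := by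
      rw [Matrix.mul_assoc, Matrix.mul_apply]
      refine Finset.sum_congr rfl fun k _ => ?_
      rw [Matrix.conjTranspose_apply, hDdef, Matrix.diagonal_mul]
      simp
    rw [h1]
    rw [two_point_sum _ ((Fin.castSucc i) : Fin (n + 1)) (Fin.succ i)
      (by simp [Fin.ext_iff])
      (fun c hc1 hc2 => by
        have hc1' : (c : ℕ) ≠ (i : ℕ) := fun h => hc1 (Fin.ext (by simpa using h))
        have hc2' : (c : ℕ) ≠ (i : ℕ) + 1 := fun h => hc2 (Fin.ext (by simpa using h))
        simp only [hBdef, Matrix.of_apply]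
        rw [if_neg hc1', if_neg hc2']
        ring)]
    simp only [hBdef, Matrix.of_apply, Fin.coe_castSucc, Fin.val_succ]
    norm_num
    rcases Nat.lt_trichotomy (i : ℕ) (j : ℕ) with h | h | h
    · rcases eq_or_lt_of_le (Nat.succ_le_of_lt h) with h' | h'
      · rw [show (j : ℕ) = (i : ℕ) + 1 from by omega]
        split_ifs <;> first | omega | ring1
      · split_ifs <;> first | omega | ring1
    · rw [show (j : ℕ) = (i : ℕ) from by omega]
      split_ifs <;> first | omega | ring1
    · rcases eq_or_lt_of_le (Nat.succ_le_of_lt h) with h' | h'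
      · rw [show (i : ℕ) = (j : ℕ) + 1 from by omega]
        split_ifs <;> first | omega | ring1
      · split_ifs <;> first | omega | ring1
  have hBinj : ∀ x : Fin n → ℝ, B *ᵥ x = 0 → x = 0 := by
    intro x hx
    have key : ∀ v : ℕ, ∀ i : Fin n, (i : ℕ) = v → x i = 0 := by
      intro v
      induction v using Nat.strong_induction_on with
      | _ v ih =>
        intro i hi
        have hrow : (B *ᵥ x) ⟨(i : ℕ), by omega⟩ = 0 := by rw [hx]; rfl
        have hsum : (B *ᵥ x) ⟨(i : ℕ), by omega⟩ = e ((i : ℕ) + 2) * x i := by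
          show (∑ j, B ⟨(i : ℕ), by omega⟩ j * x j) = _
          rw [Finset.sum_eq_single i]
          · simp [hBdef]
          · intro j _ hj
            have hj' : (j : ℕ) ≠ (i : ℕ) := fun h => hj (Fin.ext h)
            simp only [hBdef, Matrix.of_apply]
            by_cases hcase : ((⟨(i : ℕ), by omega⟩ : Fin (n + 1)) : ℕ) = (j : ℕ) + 1
            · have hjlt : (j : ℕ) < v := by simp at hcase; omega
              rw [ih _ hjlt j rfl]
              ring
            · rw [if_neg (by simpa using hj'.symm), if_neg hcase]
              ring
          · intro h; exact absurd (Finset.mem_univ i) h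
        have he2 : e ((i : ℕ) + 2) ≠ 0 := he _ (by omega) (by omega)
        have := hrow
        rw [hsum] at this
        exact (mul_eq_zero.mp this).resolve_left he2
    funext i
    exact key (i : ℕ) i rfl
  rw [hAB]
  refine Matrix.posDef_iff_dotProduct_mulVec.mpr ⟨Matrix.isHermitian_conjTranspose_mul_mul B hD.isHermitian, fun x hx => ?_⟩
  have hBx : B *ᵥ x ≠ 0 := fun h => hx (hBinj x h)
  simpa only [Matrix.star_mulVec, Matrix.dotProduct_mulVec, Matrix.vecMul_vecMul] using
    (Matrix.posDef_iff_dotProduct_mulVec.mp hD).2 hBx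

theorem tridiagonal_charge_mass_det_pos_invertible (N : ℕ) (hN : 2 ≤ N) (e m : ℕ → ℝ)
    (he : ∀ i, 1 ≤ i → i ≤ N → e i ≠ 0)
    (hm : ∀ i, 1 ≤ i → i ≤ N → 0 < m i) :
    0 < (Matrix.of fun i j : Fin (N - 1) =>
      if (i : ℕ) = (j : ℕ) then
        e ((i : ℕ) + 2) ^ 2 * m ((i : ℕ) + 1) + e ((i : ℕ) + 1) ^ 2 * m ((i : ℕ) + 2)
      else if (i : ℕ) + 1 = (j : ℕ) then
        -(e ((i : ℕ) + 1) * e ((i : ℕ) + 3) * m ((i : ℕ) + 2))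
      else if (j : ℕ) + 1 = (i : ℕ) then
        -(e ((j : ℕ) + 1) * e ((j : ℕ) + 3) * m ((j : ℕ) + 2))
      else 0).det ∧
    IsUnit (Matrix.of fun i j : Fin (N - 1) =>
      if (i : ℕ) = (j : ℕ) then
        e ((i : ℕ) + 2) ^ 2 * m ((i : ℕ) + 1) + e ((i : ℕ) + 1) ^ 2 * m ((i : ℕ) + 2)
      else if (i : ℕ) + 1 = (j : ℕ) then
        -(e ((i : ℕ) + 1) * e ((i : ℕ) + 3) * m ((i : ℕ) + 2))
      else if (j : ℕ) + 1 = (i : ℕ) then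
        -(e ((j : ℕ) + 1) * e ((j : ℕ) + 3) * m ((j : ℕ) + 2))
      else 0) := by
  have hpd := key_posdef (N - 1) e m
    (fun i h1 h2 => he i h1 (by omega)) (fun i h1 h2 => hm i h1 (by omega))
  exact ⟨hpd.det_pos, hpd.isUnit⟩
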